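/- arXiv:2605.10572 — 2 statements merged into one kernel-verified Lean document; each statement's English description precedes it below -/
import Mathlib

section
/- Fix inputs x_1,…,x_{t-1}, observations y ∈ ℝ^{t-1}, σ > 0, and two kernels k_θ̂, k_θ bounded by 1 with sup-distance d(θ̂,θ). Define μ(x; θ) = k_θ(x)ᵀ (K_θ + σ²I)⁻¹ y, where k_θ(x) is the cross-covariance vector and K_θ the Gram matrix. Then |μ(x; θ̂) − μ(x; θ)| ≤ ‖y‖₂ · (√(t−1)/σ² + √(t−1)(t−1)/σ⁴) · d(θ̂, θ) for all x. -/
open Matrix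

noncomputable def nrm {m : ℕ} (v : Fin m → ℝ) : ℝ := Real.sqrt (∑ i, v i ^ 2)

lemma nrm_nonneg {m : ℕ} (v : Fin m → ℝ) : 0 ≤ nrm v := Real.sqrt_nonneg _

lemma nrm_sq {m : ℕ} (v : Fin m → ℝ) : nrm v ^ 2 = ∑ i, v i ^ 2 :=
  Real.sq_sqrt (Finset.sum_nonneg fun i _ => sq_nonneg _)

lemma abs_dot_le {m : ℕ} (u v : Fin m → ℝ) : |u ⬝ᵥ v| ≤ nrm u * nrm v := by
  rw [abs_le]
  constructor
  · have h := Real.sum_mul_le_sqrt_mul_sqrt Finset.univ (fun i => -u i) v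
    simp only [neg_mul, neg_sq] at h
    rw [Finset.sum_neg_distrib] at h
    have h2 : -(u ⬝ᵥ v) ≤ nrm u * nrm v := by simpa [dotProduct, nrm] using h
    linarith
  · have h := Real.sum_mul_le_sqrt_mul_sqrt Finset.univ u v
    simpa [dotProduct, nrm] using h

lemma nrm_le_of_entry {m : ℕ} {v : Fin m → ℝ} {c : ℝ} (hc : 0 ≤ c) (h : ∀ i, |v i| ≤ c) :
    nrm v ≤ Real.sqrt m * c := by
  have h1 : ∑ i, v i ^ 2 ≤ (m : ℝ) * c ^ 2 := by
    calc ∑ i, v i ^ 2 ≤ ∑ _i : Fin m, c ^ 2 :=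
          Finset.sum_le_sum fun i _ => by
            have := h i
            nlinarith [abs_nonneg (v i), sq_abs (v i)]
      _ = (m : ℝ) * c ^ 2 := by simp [mul_comm]
  calc nrm v ≤ Real.sqrt ((m : ℝ) * c ^ 2) := Real.sqrt_le_sqrt h1
    _ = Real.sqrt m * c := by
        rw [Real.sqrt_mul (Nat.cast_nonneg m), Real.sqrt_sq hc]

section core

variable {m : ℕ} {σ : ℝ}

lemma posdef_shift (K : Matrix (Fin m) (Fin m) ℝ) (hK : K.PosSemidef) (hσ : 0 < σ) :
    (K + σ ^ 2 • (1 : Matrix (Fin m) (Fin m) ℝ)).PosDef := by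
  exact Matrix.PosDef.posSemidef_add hK
    (by rw [smul_one_eq_diagonal]; exact Matrix.PosDef.diagonal fun i => by positivity)

lemma inv_mulVec_eq (K : Matrix (Fin m) (Fin m) ℝ) (hK : K.PosSemidef) (hσ : 0 < σ)
    (v : Fin m → ℝ) :
    (K + σ ^ 2 • (1 : Matrix (Fin m) (Fin m) ℝ)).mulVec
      ((K + σ ^ 2 • (1 : Matrix (Fin m) (Fin m) ℝ))⁻¹.mulVec v) = v := by
  rw [mulVec_mulVec, Matrix.mul_nonsing_inv _
    ((Matrix.isUnit_iff_isUnit_det _).mp (posdef_shift K hK hσ).isUnit), one_mulVec]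

/-- norm bound for the inverse: ‖(K+σ²I)⁻¹ v‖ ≤ ‖v‖/σ². -/
lemma inv_norm_bound (K : Matrix (Fin m) (Fin m) ℝ) (hK : K.PosSemidef) (hσ : 0 < σ)
    (v : Fin m → ℝ) :
    nrm ((K + σ ^ 2 • (1 : Matrix (Fin m) (Fin m) ℝ))⁻¹.mulVec v) ≤ nrm v / σ ^ 2 := by
  set A := K + σ ^ 2 • (1 : Matrix (Fin m) (Fin m) ℝ) with hA
  set w := A⁻¹.mulVec v with hw
  have hvw : A.mulVec w = v := inv_mulVec_eq K hK hσ v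
  have hquad : σ ^ 2 * (nrm w) ^ 2 ≤ v ⬝ᵥ w := by
    have h1 : v ⬝ᵥ w = w ⬝ᵥ K.mulVec w + σ ^ 2 * (w ⬝ᵥ w) := by
      rw [← hvw, hA, add_mulVec, smul_mulVec, one_mulVec]
      rw [dotProduct_comm]
      rw [dotProduct_add, dotProduct_smul]
      simp [smul_eq_mul]
    have h2 : 0 ≤ w ⬝ᵥ K.mulVec w := by
      have := hK.dotProduct_mulVec_nonneg w
      simpa using this
    have h3 : w ⬝ᵥ w = (nrm w) ^ 2 := by
      rw [nrm_sq]; simp [dotProduct, sq]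
    rw [h1, h3]; linarith
  have hcs : v ⬝ᵥ w ≤ nrm v * nrm w := le_trans (le_abs_self _) (abs_dot_le v w)
  rcases eq_or_lt_of_le (nrm_nonneg w) with h0 | h0
  · rw [← h0]
    exact div_nonneg (nrm_nonneg v) (by positivity)
  · have : σ ^ 2 * (nrm w) ^ 2 ≤ nrm v * nrm w := le_trans hquad hcs
    rw [div_eq_inv_mul, ← mul_le_mul_iff_of_pos_right h0]
    calc nrm w * nrm w = (nrm w) ^ 2 := (sq (nrm w)).symm
      _ ≤ (σ ^ 2)⁻¹ * (nrm v * nrm w) := by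
          rw [le_inv_mul_iff₀ (by positivity)]
          linarith
      _ = (σ ^ 2)⁻¹ * nrm v * nrm w := by ring

/-- entrywise bound gives mulVec bound: ‖B w‖ ≤ m c ‖w‖. -/
lemma mulVec_norm_bound (B : Matrix (Fin m) (Fin m) ℝ) {c : ℝ} (hc : 0 ≤ c)
    (hB : ∀ i j, |B i j| ≤ c) (w : Fin m → ℝ) :
    nrm (B.mulVec w) ≤ (m : ℝ) * c * nrm w := by
  have hrow : ∀ i, |B.mulVec w i| ≤ Real.sqrt m * c * nrm w := by
    intro i
    have h1 : |B.mulVec w i| ≤ nrm (fun j => B i j) * nrm w := abs_dot_le _ w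
    have h2 : nrm (fun j => B i j) ≤ Real.sqrt m * c := nrm_le_of_entry hc (hB i)
    calc |B.mulVec w i| ≤ nrm (fun j => B i j) * nrm w := h1
      _ ≤ Real.sqrt m * c * nrm w := by
          apply mul_le_mul_of_nonneg_right h2 (nrm_nonneg w)
  have := nrm_le_of_entry (c := Real.sqrt m * c * nrm w)
    (mul_nonneg (mul_nonneg (Real.sqrt_nonneg _) hc) (nrm_nonneg _)) hrow
  calc nrm (B.mulVec w) ≤ Real.sqrt m * (Real.sqrt m * c * nrm w) := this
    _ = (Real.sqrt m * Real.sqrt m) * c * nrm w := by ring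
    _ = (m : ℝ) * c * nrm w := by
        rw [Real.mul_self_sqrt (Nat.cast_nonneg m)]

end core

/-- Lipschitz continuity of the GP posterior mean in the kernel hyperparameter
(measured in the kernel sup-metric). -/
theorem stmt_8 {X : Type*} (m : ℕ) (xs : Fin m → X) (y : Fin m → ℝ)
    (σ : ℝ) (hσ : 0 < σ)
    (k khat : X → X → ℝ)
    (hk : ∀ x x', |k x x'| ≤ 1) (hkhat : ∀ x x', |khat x x'| ≤ 1)
    (d : ℝ) (hd : ∀ x x', |khat x x' - k x x'| ≤ d)
    (hK : (Matrix.of fun i j => k (xs i) (xs j)).PosSemidef)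
    (hKhat : (Matrix.of fun i j => khat (xs i) (xs j)).PosSemidef)
    (μ μhat : X → ℝ)
    (hμ : ∀ x, μ x =
      (fun i => k (xs i) x) ⬝ᵥ
        ((Matrix.of (fun i j => k (xs i) (xs j)) + σ ^ 2 • (1 : Matrix (Fin m) (Fin m) ℝ))⁻¹).mulVec y)
    (hμhat : ∀ x, μhat x =
      (fun i => khat (xs i) x) ⬝ᵥ
        ((Matrix.of (fun i j => khat (xs i) (xs j)) + σ ^ 2 • (1 : Matrix (Fin m) (Fin m) ℝ))⁻¹).mulVec y) :
    ∀ x, |μhat x - μ x| ≤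
      Real.sqrt (∑ i, (y i) ^ 2) *
        (Real.sqrt m / σ ^ 2 + Real.sqrt m * m / σ ^ 4) * d := by
  intro x
  have hd0 : 0 ≤ d := le_trans (abs_nonneg _) (hd x x)
  set K : Matrix (Fin m) (Fin m) ℝ := Matrix.of fun i j => k (xs i) (xs j) with hKdef
  set Kh : Matrix (Fin m) (Fin m) ℝ := Matrix.of fun i j => khat (xs i) (xs j) with hKhdef
  set A := K + σ ^ 2 • (1 : Matrix (Fin m) (Fin m) ℝ) with hAdef
  set Ah := Kh + σ ^ 2 • (1 : Matrix (Fin m) (Fin m) ℝ) with hAhdef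
  set a : Fin m → ℝ := fun i => k (xs i) x with hadef
  set ah : Fin m → ℝ := fun i => khat (xs i) x with hahdef
  set w := A⁻¹.mulVec y with hwdef
  set wh := Ah⁻¹.mulVec y with hwhdef
  have hny : nrm y = Real.sqrt (∑ i, (y i) ^ 2) := rfl
  -- norm bounds
  have hw_bound : nrm w ≤ nrm y / σ ^ 2 := inv_norm_bound K hK hσ y
  have hwh_bound : nrm wh ≤ nrm y / σ ^ 2 := inv_norm_bound Kh hKhat hσ y
  -- difference of inverses
  have hAw : A.mulVec w = y := inv_mulVec_eq K hK hσ y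
  have hAhwh : Ah.mulVec wh = y := inv_mulVec_eq Kh hKhat hσ y
  have hdiff : wh - w = Ah⁻¹.mulVec ((A - Ah).mulVec w) := by
    have h1 : (A - Ah).mulVec w = y - Ah.mulVec w := by
      rw [sub_mulVec, hAw]
    rw [h1]
    have h2 : Ah⁻¹.mulVec (y - Ah.mulVec w) = Ah⁻¹.mulVec y - Ah⁻¹.mulVec (Ah.mulVec w) := by
      rw [mulVec_sub]
    rw [h2, ← hwhdef]
    congr 1
    rw [mulVec_mulVec, Matrix.nonsing_inv_mul _
      ((Matrix.isUnit_iff_isUnit_det _).mp (posdef_shift Kh hKhat hσ).isUnit), one_mulVec]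
  -- bound on (A - Ah) entries
  have hAentry : ∀ i j, |(A - Ah) i j| ≤ d := by
    intro i j
    have : (A - Ah) i j = k (xs i) (xs j) - khat (xs i) (xs j) := by
      simp [hAdef, hAhdef, hKdef, hKhdef, Matrix.sub_apply, Matrix.add_apply]
    rw [this, abs_sub_comm]
    exact hd _ _
  have hdiff_bound : nrm (wh - w) ≤ (m : ℝ) * d * nrm y / σ ^ 4 := by
    rw [hdiff]
    calc nrm (Ah⁻¹.mulVec ((A - Ah).mulVec w)) ≤ nrm ((A - Ah).mulVec w) / σ ^ 2 :=
          inv_norm_bound Kh hKhat hσ _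
      _ ≤ ((m : ℝ) * d * nrm w) / σ ^ 2 := by
          apply div_le_div_of_nonneg_right ?_ (by positivity)
          · exact mulVec_norm_bound (A - Ah) hd0 hAentry w
      _ ≤ ((m : ℝ) * d * (nrm y / σ ^ 2)) / σ ^ 2 := by
          apply div_le_div_of_nonneg_right ?_ (by positivity)
          apply mul_le_mul_of_nonneg_left hw_bound (by positivity)
      _ = (m : ℝ) * d * nrm y / σ ^ 4 := by ring
  -- vector difference bounds
  have hah_a : nrm (ah - a) ≤ Real.sqrt m * d := by
    apply nrm_le_of_entry hd0
    intro i
    simpa [hahdef, hadef] using hd (xs i) x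
  have ha_bound : nrm a ≤ Real.sqrt m * 1 := nrm_le_of_entry zero_le_one fun i => hk _ _
  -- decomposition
  have hdecomp : μhat x - μ x = (ah - a) ⬝ᵥ wh + a ⬝ᵥ (wh - w) := by
    rw [hμ x, hμhat x]
    simp only [← hwdef, ← hwhdef, ← hadef, ← hahdef, ← hAdef, ← hAhdef]
    rw [sub_dotProduct, dotProduct_sub]
    ring
  rw [hdecomp]
  calc |(ah - a) ⬝ᵥ wh + a ⬝ᵥ (wh - w)| ≤ |(ah - a) ⬝ᵥ wh| + |a ⬝ᵥ (wh - w)| := abs_add_le _ _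
    _ ≤ nrm (ah - a) * nrm wh + nrm a * nrm (wh - w) := by
        exact add_le_add (abs_dot_le _ _) (abs_dot_le _ _)
    _ ≤ (Real.sqrt m * d) * (nrm y / σ ^ 2) + (Real.sqrt m * 1) * ((m : ℝ) * d * nrm y / σ ^ 4) := by
        apply add_le_add
        · exact mul_le_mul hah_a hwh_bound (nrm_nonneg _) (mul_nonneg (Real.sqrt_nonneg _) hd0)
        · exact mul_le_mul ha_bound hdiff_bound (nrm_nonneg _) (mul_nonneg (Real.sqrt_nonneg _) zero_le_one)
    _ = nrm y * (Real.sqrt m / σ ^ 2 + Real.sqrt m * m / σ ^ 4) * d := by ring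
    _ = Real.sqrt (∑ i, (y i) ^ 2) * (Real.sqrt m / σ ^ 2 + Real.sqrt m * m / σ ^ 4) * d := by
        rw [hny]
end

section
/- Under the same setup as the posterior-mean Lipschitz result, define the posterior variance σ²(x; θ) = k_θ(x,x) − k_θ(x)ᵀ (K_θ + σ²I)⁻¹ k_θ(x). Then |σ²(x; θ̂) − σ²(x; θ)| ≤ (1 + (t−1)/σ²)² · d(θ̂, θ) for all x. -/
open Matrix

private lemma cs_dot {m : ℕ} (u w : Fin m → ℝ) :
    |u ⬝ᵥ w| ≤ Real.sqrt (∑ i, u i ^ 2) * Real.sqrt (∑ i, w i ^ 2) := by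
  have h := Finset.sum_mul_sq_le_sq_mul_sq Finset.univ u w
  rw [← Real.sqrt_mul (by positivity), ← Real.sqrt_sq_eq_abs]
  exact Real.sqrt_le_sqrt (by simpa [dotProduct] using h)

private lemma en_le {m : ℕ} (u : Fin m → ℝ) (c : ℝ) (hc : 0 ≤ c) (h : ∀ i, |u i| ≤ c) :
    Real.sqrt (∑ i, u i ^ 2) ≤ Real.sqrt m * c := by
  have hsum : ∑ i, u i ^ 2 ≤ (m : ℝ) * c ^ 2 := by
    calc ∑ i, u i ^ 2 ≤ ∑ _i : Fin m, c ^ 2 :=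
          Finset.sum_le_sum fun i _ => by
            rw [← sq_abs]; exact pow_le_pow_left₀ (abs_nonneg _) (h i) 2
      _ = (m : ℝ) * c ^ 2 := by simp [Finset.sum_const, mul_comm]
  calc Real.sqrt (∑ i, u i ^ 2) ≤ Real.sqrt ((m : ℝ) * c ^ 2) := Real.sqrt_le_sqrt hsum
    _ = Real.sqrt m * c := by
        rw [Real.sqrt_mul (by positivity), Real.sqrt_sq hc]

private lemma posDef_A {m : ℕ} {K : Matrix (Fin m) (Fin m) ℝ} (hK : K.PosSemidef)
    {σ : ℝ} (hσ : 0 < σ) : (K + σ ^ 2 • (1 : Matrix (Fin m) (Fin m) ℝ)).PosDef := by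
  refine Matrix.PosDef.posSemidef_add hK ?_
  rw [Matrix.smul_one_eq_diagonal]
  exact Matrix.posDef_diagonal_iff.mpr fun i => by positivity

private lemma inv_bound {m : ℕ} {K : Matrix (Fin m) (Fin m) ℝ} (hK : K.PosSemidef)
    {σ : ℝ} (hσ : 0 < σ) (u : Fin m → ℝ) :
    Real.sqrt (∑ i, (((K + σ ^ 2 • 1)⁻¹) *ᵥ u) i ^ 2)
      ≤ (1 / σ ^ 2) * Real.sqrt (∑ i, u i ^ 2) := by
  set A := K + σ ^ 2 • (1 : Matrix (Fin m) (Fin m) ℝ) with hAdef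
  have hA : A.PosDef := posDef_A hK hσ
  have hdet : IsUnit A.det := (Matrix.isUnit_iff_isUnit_det A).mp hA.isUnit
  set w : Fin m → ℝ := A⁻¹ *ᵥ u with hw
  have hAw : A *ᵥ w = u := by
    rw [hw, Matrix.mulVec_mulVec, Matrix.mul_nonsing_inv A hdet, Matrix.one_mulVec]
  have hKw : 0 ≤ w ⬝ᵥ (K *ᵥ w) := by simpa using hK.dotProduct_mulVec_nonneg w
  have hEw : u ⬝ᵥ w = (K *ᵥ w) ⬝ᵥ w + σ ^ 2 * (w ⬝ᵥ w) := by
    rw [← hAw, hAdef, Matrix.add_mulVec, add_dotProduct]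
    congr 1
    rw [Matrix.smul_mulVec, Matrix.one_mulVec, smul_dotProduct]
    simp [smul_eq_mul]
  have hww : w ⬝ᵥ w = ∑ i, w i ^ 2 := by simp [dotProduct, sq]
  have hlow : σ ^ 2 * (∑ i, w i ^ 2) ≤ u ⬝ᵥ w := by
    rw [hEw, hww]
    have := (dotProduct_comm (K *ᵥ w) w) ▸ hKw
    linarith [this]
  have hcs := cs_dot u w
  set eu := Real.sqrt (∑ i, u i ^ 2) with heu
  set ew := Real.sqrt (∑ i, w i ^ 2) with hew
  have hew0 : 0 ≤ ew := Real.sqrt_nonneg _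
  have heu0 : 0 ≤ eu := Real.sqrt_nonneg _
  have hewsq : ew * ew = ∑ i, w i ^ 2 := Real.mul_self_sqrt (by positivity)
  rcases eq_or_lt_of_le hew0 with h0 | h0
  · rw [← h0]; positivity
  · have h1 : σ ^ 2 * (ew * ew) ≤ eu * ew := by
      rw [hewsq]
      exact le_trans hlow (le_trans (le_abs_self _) hcs)
    have h2 : σ ^ 2 * ew ≤ eu := by
      have h1' : σ ^ 2 * ew * ew ≤ eu * ew := by nlinarith [h1]
      exact le_of_mul_le_mul_right h1' h0
    rw [div_mul_eq_mul_div, le_div_iff₀ (by positivity)]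
    nlinarith [h2]

private lemma mulvec_bound {m : ℕ} (M : Matrix (Fin m) (Fin m) ℝ) (c : ℝ) (hc : 0 ≤ c)
    (hM : ∀ i j, |M i j| ≤ c) (z : Fin m → ℝ) :
    Real.sqrt (∑ i, (M *ᵥ z) i ^ 2)
      ≤ (m : ℝ) * c * Real.sqrt (∑ i, z i ^ 2) := by
  set ez := Real.sqrt (∑ i, z i ^ 2) with hez
  have hez0 : 0 ≤ ez := Real.sqrt_nonneg _
  have hcomp : ∀ i, |(M *ᵥ z) i| ≤ Real.sqrt m * c * ez := by
    intro i
    have h1 : |(M *ᵥ z) i| ≤ Real.sqrt (∑ j, M i j ^ 2) * ez := cs_dot (M i) z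
    have h2 : Real.sqrt (∑ j, M i j ^ 2) ≤ Real.sqrt m * c := en_le (M i) c hc (hM i)
    calc |(M *ᵥ z) i| ≤ Real.sqrt (∑ j, M i j ^ 2) * ez := h1
      _ ≤ Real.sqrt m * c * ez := mul_le_mul_of_nonneg_right h2 hez0
  have := en_le (M *ᵥ z) (Real.sqrt m * c * ez) (by positivity) hcomp
  calc Real.sqrt (∑ i, (M *ᵥ z) i ^ 2)
      ≤ Real.sqrt m * (Real.sqrt m * c * ez) := this
    _ = (Real.sqrt m * Real.sqrt m) * c * ez := by ring
    _ = (m : ℝ) * c * ez := by rw [Real.mul_self_sqrt (Nat.cast_nonneg m)]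

set_option maxHeartbeats 1600000 in
/-- Lipschitz continuity of the GP posterior variance in the kernel hyperparameter
(measured in the kernel sup-metric). -/
theorem stmt_9 {X : Type*} (m : ℕ) (xs : Fin m → X)
    (σ : ℝ) (hσ : 0 < σ)
    (k khat : X → X → ℝ)
    (hk : ∀ x x', |k x x'| ≤ 1) (hkhat : ∀ x x', |khat x x'| ≤ 1)
    (d : ℝ) (hd : ∀ x x', |khat x x' - k x x'| ≤ d)
    (hK : (Matrix.of fun i j => k (xs i) (xs j)).PosSemidef)
    (hKhat : (Matrix.of fun i j => khat (xs i) (xs j)).PosSemidef)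
    (var varhat : X → ℝ)
    (hvar : ∀ x, var x = k x x -
      (fun i => k (xs i) x) ⬝ᵥ
        ((Matrix.of (fun i j => k (xs i) (xs j)) + σ ^ 2 • (1 : Matrix (Fin m) (Fin m) ℝ))⁻¹).mulVec
          (fun i => k (xs i) x))
    (hvarhat : ∀ x, varhat x = khat x x -
      (fun i => khat (xs i) x) ⬝ᵥ
        ((Matrix.of (fun i j => khat (xs i) (xs j)) + σ ^ 2 • (1 : Matrix (Fin m) (Fin m) ℝ))⁻¹).mulVec
          (fun i => khat (xs i) x)) :
    ∀ x, |varhat x - var x| ≤ (1 + m / σ ^ 2) ^ 2 * d := by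
  intro x
  have hd0 : 0 ≤ d := le_trans (abs_nonneg _) (hd x x)
  set K : Matrix (Fin m) (Fin m) ℝ := Matrix.of fun i j => k (xs i) (xs j) with hKdef
  set Kh : Matrix (Fin m) (Fin m) ℝ := Matrix.of fun i j => khat (xs i) (xs j) with hKhdef
  set A := K + σ ^ 2 • (1 : Matrix (Fin m) (Fin m) ℝ) with hAdef
  set Ah := Kh + σ ^ 2 • (1 : Matrix (Fin m) (Fin m) ℝ) with hAhdef
  set B := A⁻¹ with hBdef
  set Bh := Ah⁻¹ with hBhdef
  set v : Fin m → ℝ := fun i => k (xs i) x with hv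
  set vh : Fin m → ℝ := fun i => khat (xs i) x with hvh
  have hA : A.PosDef := posDef_A hK hσ
  have hAh : Ah.PosDef := posDef_A hKhat hσ
  have hdetA : IsUnit A.det := (Matrix.isUnit_iff_isUnit_det A).mp hA.isUnit
  have hdetAh : IsUnit Ah.det := (Matrix.isUnit_iff_isUnit_det Ah).mp hAh.isUnit
  -- matrix identity
  have key : Bh *ᵥ ((K - Kh) *ᵥ (B *ᵥ v)) = Bh *ᵥ v - B *ᵥ v := by
    have h1 : K - Kh = A - Ah := by rw [hAdef, hAhdef]; abel
    rw [h1, Matrix.mulVec_mulVec, Matrix.mulVec_mulVec]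
    have h2 : Bh * (A - Ah) * B = Bh - B := by
      rw [Matrix.mul_sub, Matrix.sub_mul, Matrix.mul_assoc,
        Matrix.mul_nonsing_inv A hdetA, Matrix.mul_one,
        Matrix.nonsing_inv_mul Ah hdetAh, Matrix.one_mul]
    rw [h2, Matrix.sub_mulVec]
  set T1 := (vh - v) ⬝ᵥ (Bh *ᵥ vh) with hT1
  set T2 := v ⬝ᵥ (Bh *ᵥ (vh - v)) with hT2
  set T3 := v ⬝ᵥ (Bh *ᵥ ((K - Kh) *ᵥ (B *ᵥ v))) with hT3
  have hsplit : vh ⬝ᵥ (Bh *ᵥ vh) - v ⬝ᵥ (B *ᵥ v) = T1 + T2 + T3 := by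
    rw [hT1, hT2, hT3, key]
    rw [sub_dotProduct, Matrix.mulVec_sub, dotProduct_sub,
      dotProduct_sub]
    ring
  -- norms
  set s := Real.sqrt (m : ℝ) with hs
  have hs0 : 0 ≤ s := Real.sqrt_nonneg _
  have hss : s * s = (m : ℝ) := Real.mul_self_sqrt (Nat.cast_nonneg m)
  set ev := Real.sqrt (∑ i, v i ^ 2) with hev
  set evh := Real.sqrt (∑ i, vh i ^ 2) with hevh
  set edv := Real.sqrt (∑ i, (vh - v) i ^ 2) with hedv
  have hev0 : 0 ≤ ev := Real.sqrt_nonneg _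
  have hevh0 : 0 ≤ evh := Real.sqrt_nonneg _
  have hedv0 : 0 ≤ edv := Real.sqrt_nonneg _
  have hevs : ev ≤ s := by
    calc ev ≤ s * 1 := en_le v 1 zero_le_one fun i => hk (xs i) x
      _ = s := mul_one s
  have hevhs : evh ≤ s := by
    calc evh ≤ s * 1 := en_le vh 1 zero_le_one fun i => hkhat (xs i) x
      _ = s := mul_one s
  have hedvs : edv ≤ s * d := en_le (vh - v) d hd0 fun i => hd (xs i) x
  have hσ2 : (0:ℝ) < σ ^ 2 := by positivity
  -- T1
  have hBhvh : Real.sqrt (∑ i, (Bh *ᵥ vh) i ^ 2) ≤ (1 / σ ^ 2) * evh :=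
    inv_bound hKhat hσ vh
  have hBhvh0 : 0 ≤ Real.sqrt (∑ i, (Bh *ᵥ vh) i ^ 2) := Real.sqrt_nonneg _
  have bT1 : |T1| ≤ (m : ℝ) * d / σ ^ 2 := by
    have h1 := cs_dot (vh - v) (Bh *ᵥ vh)
    have h2 : edv * Real.sqrt (∑ i, (Bh *ᵥ vh) i ^ 2)
        ≤ (s * d) * ((1 / σ ^ 2) * s) := by
      apply mul_le_mul hedvs (le_trans hBhvh ?_) hBhvh0 (by positivity)
      exact mul_le_mul_of_nonneg_left hevhs (by positivity)
    have h3 : (s * d) * ((1 / σ ^ 2) * s) = (m : ℝ) * d / σ ^ 2 := by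
      field_simp; nlinarith [hss]
    calc |T1| ≤ edv * Real.sqrt (∑ i, (Bh *ᵥ vh) i ^ 2) := h1
      _ ≤ (s * d) * ((1 / σ ^ 2) * s) := h2
      _ = (m : ℝ) * d / σ ^ 2 := h3
  -- T2
  have hBhdv : Real.sqrt (∑ i, (Bh *ᵥ (vh - v)) i ^ 2) ≤ (1 / σ ^ 2) * edv :=
    inv_bound hKhat hσ (vh - v)
  have bT2 : |T2| ≤ (m : ℝ) * d / σ ^ 2 := by
    have h1 := cs_dot v (Bh *ᵥ (vh - v))
    have h2 : ev * Real.sqrt (∑ i, (Bh *ᵥ (vh - v)) i ^ 2)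
        ≤ s * ((1 / σ ^ 2) * (s * d)) := by
      apply mul_le_mul hevs (le_trans hBhdv ?_) (Real.sqrt_nonneg _) hs0
      exact mul_le_mul_of_nonneg_left hedvs (by positivity)
    have h3 : s * ((1 / σ ^ 2) * (s * d)) = (m : ℝ) * d / σ ^ 2 := by
      field_simp; nlinarith [hss]
    calc |T2| ≤ ev * Real.sqrt (∑ i, (Bh *ᵥ (vh - v)) i ^ 2) := h1
      _ ≤ s * ((1 / σ ^ 2) * (s * d)) := h2
      _ = (m : ℝ) * d / σ ^ 2 := h3
  -- T3
  have hBv : Real.sqrt (∑ i, (B *ᵥ v) i ^ 2) ≤ (1 / σ ^ 2) * ev :=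
    inv_bound hK hσ v
  have hdK : ∀ i j, |(K - Kh) i j| ≤ d := by
    intro i j
    simp only [hKdef, hKhdef, Matrix.sub_apply, Matrix.of_apply]
    rw [abs_sub_comm]
    exact hd (xs i) (xs j)
  have hKKh : Real.sqrt (∑ i, ((K - Kh) *ᵥ (B *ᵥ v)) i ^ 2)
      ≤ (m : ℝ) * d * Real.sqrt (∑ i, (B *ᵥ v) i ^ 2) :=
    mulvec_bound (K - Kh) d hd0 hdK (B *ᵥ v)
  have hBh3 : Real.sqrt (∑ i, (Bh *ᵥ ((K - Kh) *ᵥ (B *ᵥ v))) i ^ 2)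
      ≤ (1 / σ ^ 2) * Real.sqrt (∑ i, ((K - Kh) *ᵥ (B *ᵥ v)) i ^ 2) :=
    inv_bound hKhat hσ _
  have bT3 : |T3| ≤ (m : ℝ) ^ 2 * d / σ ^ 4 := by
    have h1 := cs_dot v (Bh *ᵥ ((K - Kh) *ᵥ (B *ᵥ v)))
    have hBv0 : 0 ≤ Real.sqrt (∑ i, (B *ᵥ v) i ^ 2) := Real.sqrt_nonneg _
    have h2 : Real.sqrt (∑ i, ((K - Kh) *ᵥ (B *ᵥ v)) i ^ 2)
        ≤ (m : ℝ) * d * ((1 / σ ^ 2) * s) := by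
      refine le_trans hKKh (mul_le_mul_of_nonneg_left ?_ (by positivity))
      exact le_trans hBv (mul_le_mul_of_nonneg_left hevs (by positivity))
    have h3 : Real.sqrt (∑ i, (Bh *ᵥ ((K - Kh) *ᵥ (B *ᵥ v))) i ^ 2)
        ≤ (1 / σ ^ 2) * ((m : ℝ) * d * ((1 / σ ^ 2) * s)) :=
      le_trans hBh3 (mul_le_mul_of_nonneg_left h2 (by positivity))
    have h4 : ev * ((1 / σ ^ 2) * ((m : ℝ) * d * ((1 / σ ^ 2) * s)))
        ≤ s * ((1 / σ ^ 2) * ((m : ℝ) * d * ((1 / σ ^ 2) * s))) :=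
      mul_le_mul_of_nonneg_right hevs (by positivity)
    have h5 : s * ((1 / σ ^ 2) * ((m : ℝ) * d * ((1 / σ ^ 2) * s)))
        = (m : ℝ) ^ 2 * d / σ ^ 4 := by
      field_simp
      linear_combination ((m : ℝ) * d) * hss
    calc |T3| ≤ ev * Real.sqrt (∑ i, (Bh *ᵥ ((K - Kh) *ᵥ (B *ᵥ v))) i ^ 2) := h1
      _ ≤ ev * ((1 / σ ^ 2) * ((m : ℝ) * d * ((1 / σ ^ 2) * s))) :=
          mul_le_mul_of_nonneg_left h3 hev0
      _ ≤ s * ((1 / σ ^ 2) * ((m : ℝ) * d * ((1 / σ ^ 2) * s))) := h4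
      _ = (m : ℝ) ^ 2 * d / σ ^ 4 := h5
  -- combine
  have hdiff : varhat x - var x = (khat x x - k x x) - (T1 + T2 + T3) := by
    rw [hvarhat x, hvar x, ← hsplit]
    ring
  have habs : |varhat x - var x| ≤ |khat x x - k x x| + (|T1| + |T2| + |T3|) := by
    rw [hdiff]
    calc |khat x x - k x x - (T1 + T2 + T3)|
        ≤ |khat x x - k x x| + |T1 + T2 + T3| := abs_sub _ _
      _ ≤ |khat x x - k x x| + (|T1| + |T2| + |T3|) := by
          gcongr
          calc |T1 + T2 + T3| ≤ |T1 + T2| + |T3| := abs_add_le _ _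
            _ ≤ |T1| + |T2| + |T3| := by gcongr; exact abs_add_le _ _
  have hfin : |khat x x - k x x| + (|T1| + |T2| + |T3|)
      ≤ d + ((m : ℝ) * d / σ ^ 2 + (m : ℝ) * d / σ ^ 2 + (m : ℝ) ^ 2 * d / σ ^ 4) := by
    gcongr
    exact hd x x
  have heq : d + ((m : ℝ) * d / σ ^ 2 + (m : ℝ) * d / σ ^ 2 + (m : ℝ) ^ 2 * d / σ ^ 4)
      = (1 + (m : ℝ) / σ ^ 2) ^ 2 * d := by
    field_simp
    ring
  linarith [habs, hfin, heq.le, heq.ge]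
end
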